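/- Let X ~ MaxGumbel(μx, β) and Y ~ MinGumbel(μy, β) be independent with β > 0 and uniform base measure. The Bernoulli parameter ∏_{j=1}^d E[max(Y_j - X_j, 0)] for a d-dimensional Gumbel box with independent coordinates equals ∏_{j=1}^d 2β·K₀(2e^{-(μ_j^max - μ_j^min)/(2β)}); i.e., the expected volume of the box factorizes over dimensions. -/

import Mathlib

open MeasureTheory

/-- Density of MaxGumbel(μ, β). -/
noncomputable def maxGumbelPDF (μ β x : ℝ) : ℝ :=
  (1 / β) * Real.exp (-(x - μ) / β - Real.exp (-(x - μ) / β))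

/-- Density of MinGumbel(μ, β). -/
noncomputable def minGumbelPDF (μ β y : ℝ) : ℝ :=
  (1 / β) * Real.exp ((y - μ) / β - Real.exp ((y - μ) / β))

/-- Modified Bessel function of the second kind of order zero,
K₀(z) = ∫₀^∞ exp(-z cosh u) du. -/
noncomputable def besselK0 (z : ℝ) : ℝ :=
  ∫ u in Set.Ioi (0 : ℝ), Real.exp (-z * Real.cosh u)

section GumbelAux
open Set Real
open scoped ENNReal

lemma minG_deriv (μ β : ℝ) (hβ : 0 < β) (y : ℝ) :
    HasDerivAt (fun y => -Real.exp (-Real.exp ((y - μ) / β))) (minGumbelPDF μ β y) y := by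
  have h1 : HasDerivAt (fun y : ℝ => (y - μ) / β) (1 / β) y := by
    simpa using ((hasDerivAt_id y).sub_const μ).div_const β
  have h4 := ((h1.exp).neg).exp.neg
  refine h4.congr_deriv (Eq.symm ?_)
  unfold minGumbelPDF
  simp only [Pi.neg_apply]
  rw [Real.exp_sub, Real.exp_neg]
  field_simp

lemma minG_tendsto (μ β : ℝ) (hβ : 0 < β) :
    Filter.Tendsto (fun y => -Real.exp (-Real.exp ((y - μ) / β))) Filter.atTop (nhds 0) := by
  have t1 : Filter.Tendsto (fun y : ℝ => (y - μ) / β) Filter.atTop Filter.atTop := by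
    apply Filter.Tendsto.atTop_div_const hβ
    exact Filter.tendsto_atTop_add_const_right _ (-μ) Filter.tendsto_id |>.congr (by intro x; simp [sub_eq_add_neg, add_comm])
  have t4 := (Real.tendsto_exp_atBot.comp ((Filter.tendsto_neg_atTop_atBot).comp
    (Real.tendsto_exp_atTop.comp t1))).neg
  simpa using t4

lemma minG_int (μ β t : ℝ) (hβ : 0 < β) :
    IntegrableOn (minGumbelPDF μ β) (Set.Ioi t) := by
  apply integrableOn_Ioi_deriv_of_nonneg' (fun y _ => minG_deriv μ β hβ y) _ (minG_tendsto μ β hβ)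
  intro x _
  unfold minGumbelPDF
  positivity

lemma minG_integral (μ β t : ℝ) (hβ : 0 < β) :
    ∫ y in Set.Ioi t, minGumbelPDF μ β y = Real.exp (-Real.exp ((t - μ) / β)) := by
  rw [integral_Ioi_of_hasDerivAt_of_nonneg' (fun y _ => minG_deriv μ β hβ y) _ (minG_tendsto μ β hβ)]
  · ring
  · intro x _; unfold minGumbelPDF; positivity

lemma maxG_reflect (μ β x : ℝ) : maxGumbelPDF μ β (-x) = minGumbelPDF (-μ) β x := by
  unfold maxGumbelPDF minGumbelPDF
  rw [show -(-x - μ) = x - -μ by ring]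


lemma maxG_int (μ β t : ℝ) (hβ : 0 < β) :
    IntegrableOn (maxGumbelPDF μ β) (Set.Iio t) := by
  have m : MeasurableEmbedding fun x : ℝ => -x := (Homeomorph.neg ℝ).measurableEmbedding
  have : IntegrableOn (fun x => maxGumbelPDF μ β (-x)) (Set.Ioi (-t)) := by
    simp_rw [maxG_reflect]
    exact minG_int (-μ) β (-t) hβ
  rw [show (Set.Iio t) = (fun x : ℝ => -x) ⁻¹' (Set.Ioi (-t)) by ext z; simp, ← (Measure.measurePreserving_neg (volume : Measure ℝ)).integrableOn_comp_preimage m]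
  simpa [Function.comp_def, Set.neg_preimage, Set.neg_Iio] using this

lemma maxG_integral (μ β t : ℝ) (hβ : 0 < β) :
    ∫ x in Set.Iio t, maxGumbelPDF μ β x = Real.exp (-Real.exp (-(t - μ) / β)) := by
  have h1 : ∫ x in Set.Iio t, maxGumbelPDF μ β x = ∫ x in Set.Iic t, maxGumbelPDF μ β x := by
    refine setIntegral_congr_set ?_
    exact Iio_ae_eq_Iic
  rw [h1, ← neg_neg t, ← integral_comp_neg_Ioi]
  simp_rw [maxG_reflect, neg_neg]
  rw [minG_integral (-μ) β (-t) hβ]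
  congr 2
  ring

lemma integrable_exp_neg_cosh {z : ℝ} (hz : 0 < z) :
    Integrable (fun u : ℝ => Real.exp (-z * Real.cosh u)) := by
  have cont : Continuous (fun u : ℝ => Real.exp (-z * Real.cosh u)) := by fun_prop
  have key : ∀ u : ℝ, 0 ≤ u → Real.exp (-z * Real.cosh u) ≤ Real.exp (-(z/2) * u) := by
    intro u hu
    apply Real.exp_le_exp.2
    have h1 : u ≤ Real.exp u := (Real.add_one_le_exp u).trans' (by linarith)
    have h2 : Real.exp u / 2 ≤ Real.cosh u := by
      rw [Real.cosh_eq]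
      have := (Real.exp_pos (-u)).le
      linarith
    nlinarith
  have hIoi : IntegrableOn (fun u : ℝ => Real.exp (-z * Real.cosh u)) (Set.Ioi 0) := by
    apply Integrable.mono (exp_neg_integrableOn_Ioi 0 (by linarith : (0:ℝ) < z/2))
      cont.aestronglyMeasurable.restrict
    rw [ae_restrict_iff' measurableSet_Ioi]
    filter_upwards with u hu
    rw [Real.norm_eq_abs, Real.norm_eq_abs, abs_of_nonneg (Real.exp_pos _).le,
      abs_of_nonneg (Real.exp_pos _).le]
    exact key u (le_of_lt hu)
  have hIic : IntegrableOn (fun u : ℝ => Real.exp (-z * Real.cosh u)) (Set.Iic 0) := by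
    rw [← Measure.map_neg_eq_self (volume : Measure ℝ)]
    have m : MeasurableEmbedding fun x : ℝ => -x := (Homeomorph.neg ℝ).measurableEmbedding
    rw [m.integrableOn_map_iff]
    simp_rw [Function.comp_def, Real.cosh_neg, Set.neg_preimage, Set.neg_Iic, neg_zero]
    exact Iff.mpr integrableOn_Ici_iff_integrableOn_Ioi hIoi
  have := hIic.union hIoi
  rwa [Set.Iic_union_Ioi, integrableOn_univ] at this

lemma integral_exp_neg_cosh {z : ℝ} (hz : 0 < z) :
    ∫ u : ℝ, Real.exp (-z * Real.cosh u) = 2 * besselK0 z := by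
  have : ∀ u : ℝ, Real.exp (-z * Real.cosh u) = Real.exp (-z * Real.cosh |u|) := by
    intro u; rw [Real.cosh_abs]
  rw [show (fun u : ℝ => Real.exp (-z * Real.cosh u)) = fun u : ℝ => Real.exp (-z * Real.cosh |u|) by
    funext u; rw [Real.cosh_abs]]
  rw [integral_comp_abs (f := fun u => Real.exp (-z * Real.cosh u))]
  rfl

lemma pointwise_cosh (μx μy β t : ℝ) (hβ : 0 < β) :
    Real.exp (-Real.exp (-(t - μx) / β)) * Real.exp (-Real.exp ((t - μy) / β)) =
      Real.exp (-(2 * Real.exp (-(μy - μx) / (2 * β))) *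
        Real.cosh ((t - (μx + μy) / 2) / β)) := by
  rw [← Real.exp_add, Real.cosh_eq]
  have e1 : 2 * Real.exp (-(μy - μx) / (2 * β)) * (Real.exp ((t - (μx + μy) / 2) / β) / 2)
      = Real.exp ((t - μy) / β) := by
    rw [show 2 * Real.exp (-(μy - μx) / (2 * β)) * (Real.exp ((t - (μx + μy) / 2) / β) / 2)
        = Real.exp (-(μy - μx) / (2 * β)) * Real.exp ((t - (μx + μy) / 2) / β) by ring,
      ← Real.exp_add]
    congr 1
    field_simp
    ring
  have e2 : 2 * Real.exp (-(μy - μx) / (2 * β)) * (Real.exp (-((t - (μx + μy) / 2) / β)) / 2)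
      = Real.exp (-(t - μx) / β) := by
    rw [show 2 * Real.exp (-(μy - μx) / (2 * β)) * (Real.exp (-((t - (μx + μy) / 2) / β)) / 2)
        = Real.exp (-(μy - μx) / (2 * β)) * Real.exp (-((t - (μx + μy) / 2) / β)) by ring,
      ← Real.exp_add]
    congr 1
    field_simp
    ring
  congr 1
  linear_combination e1 + e2

lemma integrable_h (μx μy β : ℝ) (hβ : 0 < β) :
    Integrable (fun t : ℝ => Real.exp (-Real.exp (-(t - μx) / β)) * Real.exp (-Real.exp ((t - μy) / β))) := by
  have hz : 0 < 2 * Real.exp (-(μy - μx) / (2 * β)) := by positivity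
  have base := integrable_exp_neg_cosh hz
  have b2 := (integrable_comp_mul_right_iff
    (fun u : ℝ => Real.exp (-(2 * Real.exp (-(μy - μx) / (2 * β))) * Real.cosh u))
    (inv_ne_zero hβ.ne')).2 base
  have b3 := b2.comp_sub_right ((μx + μy) / 2)
  refine b3.congr ?_
  filter_upwards with t
  rw [pointwise_cosh μx μy β t hβ, div_eq_mul_inv (t - (μx + μy) / 2) β]

lemma integral_h (μx μy β : ℝ) (hβ : 0 < β) :
    ∫ t : ℝ, Real.exp (-Real.exp (-(t - μx) / β)) * Real.exp (-Real.exp ((t - μy) / β))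
      = 2 * β * besselK0 (2 * Real.exp (-(μy - μx) / (2 * β))) := by
  have hz : 0 < 2 * Real.exp (-(μy - μx) / (2 * β)) := by positivity
  set z := 2 * Real.exp (-(μy - μx) / (2 * β)) with hzdef
  have step1 : (∫ t : ℝ, Real.exp (-Real.exp (-(t - μx) / β)) * Real.exp (-Real.exp ((t - μy) / β)))
      = ∫ t : ℝ, (fun u : ℝ => Real.exp (-z * Real.cosh u)) ((t - (μx + μy) / 2) * β⁻¹) := by
    congr 1; funext t
    rw [pointwise_cosh μx μy β t hβ, div_eq_mul_inv (t - (μx + μy) / 2) β]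
  rw [step1]
  rw [integral_sub_right_eq_self (fun t : ℝ => (fun u : ℝ => Real.exp (-z * Real.cosh u)) (t * β⁻¹)) ((μx + μy) / 2)]
  rw [Measure.integral_comp_mul_right (fun u : ℝ => Real.exp (-z * Real.cosh u)) β⁻¹]
  rw [integral_exp_neg_cosh hz]
  rw [smul_eq_mul, inv_inv, abs_of_pos hβ]
  ring

lemma maxG_cont (μ β : ℝ) : Continuous (maxGumbelPDF μ β) := by
  unfold maxGumbelPDF; fun_prop

lemma minG_cont (μ β : ℝ) : Continuous (minGumbelPDF μ β) := by
  unfold minGumbelPDF; fun_prop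

lemma maxG_nonneg (μ β : ℝ) (hβ : 0 < β) (x : ℝ) : 0 ≤ maxGumbelPDF μ β x := by
  unfold maxGumbelPDF; positivity

lemma minG_nonneg (μ β : ℝ) (hβ : 0 < β) (y : ℝ) : 0 ≤ minGumbelPDF μ β y := by
  unfold minGumbelPDF; positivity

lemma single_coord (μx μy β : ℝ) (hβ : 0 < β) :
    ∫ p : ℝ × ℝ, max (p.2 - p.1) 0 * maxGumbelPDF μx β p.1 * minGumbelPDF μy β p.2
      = 2 * β * besselK0 (2 * Real.exp (-(μy - μx) / (2 * β))) := by
  classical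
  set f := maxGumbelPDF μx β with hf
  set g := minGumbelPDF μy β with hg
  have f_nn : ∀ x, 0 ≤ f x := maxG_nonneg μx β hβ
  have g_nn : ∀ y, 0 ≤ g y := minG_nonneg μy β hβ
  have f_cont : Continuous f := maxG_cont μx β
  have g_cont : Continuous g := minG_cont μy β
  set F : ℝ → ℝ := fun t => Real.exp (-Real.exp (-(t - μx) / β)) with hF
  set S : ℝ → ℝ := fun t => Real.exp (-Real.exp ((t - μy) / β)) with hS
  set k : ℝ → ℝ → ℝ → ℝ≥0∞ := fun t x y =>
    if x < t ∧ t ≤ y then ENNReal.ofReal (f x) * ENNReal.ofReal (g y) else 0 with hk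
  -- Step G: convert to lintegral
  have W_cont : Continuous (fun p : ℝ × ℝ => max (p.2 - p.1) 0 * f p.1 * g p.2) := by fun_prop
  have W_nn : ∀ p : ℝ × ℝ, 0 ≤ max (p.2 - p.1) 0 * f p.1 * g p.2 := fun p =>
    mul_nonneg (mul_nonneg (le_max_right _ _) (f_nn _)) (g_nn _)
  rw [integral_eq_lintegral_of_nonneg_ae (Filter.Eventually.of_forall W_nn)
    W_cont.aestronglyMeasurable]
  -- Step A: pointwise identity
  have stepA : ∀ x y : ℝ, ENNReal.ofReal (max (y - x) 0 * f x * g y) = ∫⁻ t, k t x y := by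
    intro x y
    have h1 : (fun t => k t x y) = (Set.Ioc x y).indicator
        (fun _ => ENNReal.ofReal (f x) * ENNReal.ofReal (g y)) := by
      funext t
      simp only [hk, Set.indicator_apply, Set.mem_Ioc]
    rw [h1, lintegral_indicator measurableSet_Ioc, setLIntegral_const, Real.volume_Ioc]
    have hmax : ENNReal.ofReal (max (y - x) 0) = ENNReal.ofReal (y - x) := by
      rcases le_total (y - x) 0 with h | h
      · simp [max_eq_right h, ENNReal.ofReal_of_nonpos h]
      · simp [max_eq_left h]
    rw [ENNReal.ofReal_mul (mul_nonneg (le_max_right _ _) (f_nn _)),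
      ENNReal.ofReal_mul (le_max_right _ _), hmax]
    ring
  -- measurability for swaps
  have g_meas : Measurable fun y : ℝ => ENNReal.ofReal (g y) :=
    ENNReal.measurable_ofReal.comp g_cont.measurable
  have f_meas : Measurable fun x : ℝ => ENNReal.ofReal (f x) :=
    ENNReal.measurable_ofReal.comp f_cont.measurable
  have S_cont : Continuous S := by fun_prop
  -- Step B: inner y-integral
  have SIci : ∀ t : ℝ, ∫⁻ y in Set.Ici t, ENNReal.ofReal (g y) = ENNReal.ofReal (S t) := by
    intro t
    rw [setLIntegral_congr (Filter.EventuallyEq.symm Ioi_ae_eq_Ici),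
      ← ofReal_integral_eq_lintegral_ofReal (minG_int μy β t hβ)
        (Filter.Eventually.of_forall fun y => g_nn y), minG_integral μy β t hβ]
  have stepB : ∀ t x : ℝ, (∫⁻ y, k t x y)
      = (Set.Iio t).indicator (fun x => ENNReal.ofReal (f x)) x * ENNReal.ofReal (S t) := by
    intro t x
    by_cases hxt : x < t
    · have h2 : (fun y => k t x y) = (Set.Ici t).indicator
          (fun y => ENNReal.ofReal (f x) * ENNReal.ofReal (g y)) := by
        funext y
        simp only [hk, Set.indicator_apply, Set.mem_Ici, hxt, true_and]
      rw [h2, lintegral_indicator measurableSet_Ici, lintegral_const_mul _ g_meas,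
        SIci t, Set.indicator_of_mem (Set.mem_Iio.2 hxt)]
    · have h2 : (fun y => k t x y) = fun _ => 0 := by
        funext y
        simp only [hk, hxt, false_and, if_false]
      rw [h2, lintegral_zero, Set.indicator_of_notMem (by simpa using hxt), zero_mul]
  -- CDF lintegral
  have FIio : ∀ t : ℝ, ∫⁻ x in Set.Iio t, ENNReal.ofReal (f x) = ENNReal.ofReal (F t) := by
    intro t
    rw [← ofReal_integral_eq_lintegral_ofReal (maxG_int μx β t hβ)
      (Filter.Eventually.of_forall fun x => f_nn x), maxG_integral μx β t hβ]
  -- switch to product measure and iterate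
  rw [MeasureTheory.Measure.volume_eq_prod,
    lintegral_prod (fun p : ℝ × ℝ => ENNReal.ofReal (max (p.2 - p.1) 0 * f p.1 * g p.2))
      (ENNReal.measurable_ofReal.comp W_cont.measurable).aemeasurable]
  have chain : (∫⁻ x, ∫⁻ y, ENNReal.ofReal (max (y - x) 0 * f x * g y))
      = ∫⁻ t, ENNReal.ofReal (F t) * ENNReal.ofReal (S t) := by
    have c1 : (∫⁻ x, ∫⁻ y, ENNReal.ofReal (max (y - x) 0 * f x * g y))
        = ∫⁻ x, ∫⁻ y, ∫⁻ t, k t x y :=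
      lintegral_congr fun x => lintegral_congr fun y => stepA x y
    have c2 : (∫⁻ x, ∫⁻ y, ∫⁻ t, k t x y) = ∫⁻ x, ∫⁻ t, ∫⁻ y, k t x y := by
      refine lintegral_congr fun x => ?_
      have m1 : Measurable (Function.uncurry fun y t : ℝ => k t x y) := by
        have : (Function.uncurry fun y t : ℝ => k t x y) = fun p : ℝ × ℝ =>
            if x < p.2 ∧ p.2 ≤ p.1 then ENNReal.ofReal (f x) * ENNReal.ofReal (g p.1) else 0 := rfl
        rw [this]
        exact Measurable.ite ((measurable_snd measurableSet_Ioi).inter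
            (measurableSet_le measurable_snd measurable_fst))
          ((g_meas.comp measurable_fst).const_mul _) measurable_const
      exact lintegral_lintegral_swap m1.aemeasurable
    have c3 : (∫⁻ x, ∫⁻ t, ∫⁻ y, k t x y)
        = ∫⁻ x, ∫⁻ t, (Set.Iio t).indicator (fun x => ENNReal.ofReal (f x)) x
            * ENNReal.ofReal (S t) :=
      lintegral_congr fun x => lintegral_congr fun t => stepB t x
    have c4 : (∫⁻ x, ∫⁻ t, (Set.Iio t).indicator (fun x => ENNReal.ofReal (f x)) x
          * ENNReal.ofReal (S t))
        = ∫⁻ t, ∫⁻ x, (Set.Iio t).indicator (fun x => ENNReal.ofReal (f x)) x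
            * ENNReal.ofReal (S t) := by
      have m2 : Measurable (Function.uncurry fun x t : ℝ =>
          (Set.Iio t).indicator (fun x => ENNReal.ofReal (f x)) x * ENNReal.ofReal (S t)) := by
        have : (Function.uncurry fun x t : ℝ =>
            (Set.Iio t).indicator (fun x => ENNReal.ofReal (f x)) x * ENNReal.ofReal (S t))
            = fun p : ℝ × ℝ => (if p.1 < p.2 then ENNReal.ofReal (f p.1) else 0)
                * ENNReal.ofReal (S p.2) := by
          funext p
          simp [Function.uncurry, Set.indicator_apply]
        rw [this]
        exact (Measurable.ite (measurableSet_lt measurable_fst measurable_snd)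
            (f_meas.comp measurable_fst) measurable_const).mul
          (ENNReal.measurable_ofReal.comp (S_cont.measurable.comp measurable_snd))
      exact lintegral_lintegral_swap m2.aemeasurable
    have c5 : (∫⁻ t, ∫⁻ x, (Set.Iio t).indicator (fun x => ENNReal.ofReal (f x)) x
          * ENNReal.ofReal (S t))
        = ∫⁻ t, ENNReal.ofReal (F t) * ENNReal.ofReal (S t) := by
      refine lintegral_congr fun t => ?_
      rw [lintegral_mul_const _ (f_meas.indicator measurableSet_Iio),
        lintegral_indicator measurableSet_Iio, FIio t]
    rw [c1, c2, c3, c4, c5]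
  rw [chain]
  have final : (∫⁻ t, ENNReal.ofReal (F t) * ENNReal.ofReal (S t))
      = ENNReal.ofReal (2 * β * besselK0 (2 * Real.exp (-(μy - μx) / (2 * β)))) := by
    have : ∀ t : ℝ, ENNReal.ofReal (F t) * ENNReal.ofReal (S t)
        = ENNReal.ofReal (F t * S t) := fun t =>
      (ENNReal.ofReal_mul (le_of_lt (Real.exp_pos _))).symm
    simp_rw [this]
    rw [← ofReal_integral_eq_lintegral_ofReal (integrable_h μx μy β hβ)
      (Filter.Eventually.of_forall fun t =>
        mul_nonneg (le_of_lt (Real.exp_pos _)) (le_of_lt (Real.exp_pos _))),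
      integral_h μx μy β hβ]
  rw [final, ENNReal.toReal_ofReal]
  exact mul_nonneg (by positivity) (integral_nonneg fun u => le_of_lt (Real.exp_pos _))

end GumbelAux

/-- The expected volume of a d-dimensional Gumbel box with independent
coordinates X_j ~ MaxGumbel(μmin j, β), Y_j ~ MinGumbel(μmax j, β) factorizes
over dimensions: ∏_j E[max(Y_j - X_j, 0)] = ∏_j 2β·K₀(2e^{-(μmax j - μmin j)/(2β)}). -/
theorem gumbel_box_expected_volume_factorizes (d : ℕ) (β : ℝ) (hβ : 0 < β)
    (μmin μmax : Fin d → ℝ) :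
    (∏ j : Fin d, ∫ p : ℝ × ℝ,
        max (p.2 - p.1) 0 * maxGumbelPDF (μmin j) β p.1 * minGumbelPDF (μmax j) β p.2) =
      ∏ j : Fin d, 2 * β * besselK0 (2 * Real.exp (-(μmax j - μmin j) / (2 * β))) := by
  refine Finset.prod_congr rfl fun j _ => ?_
  exact single_coord (μmin j) (μmax j) β hβ
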